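/- arXiv:2006.13093 — 2 statements merged into one kernel-verified Lean document; each statement's English description precedes it below -/
import Mathlib

section
/- Let Z : (−∞, t₀] → ℝ be a C¹ solution of Ż ≤ Z(N + a − Z/λ) with Z(t₀) > λ(N+a) (λ > 0, N + a > 0). Then Z cannot be defined (staying above λ(N+a)) for all t ≤ t₀: there exists a finite backward time at which Z blows up. Consequently, any solution of Ż ≤ Z(N+a−Z/λ) defined on (−∞, t₀] must satisfy Z(t) ≤ λ(N+a) for all t sufficiently negative. -/
theorem stmt13 (lam N a : ℝ) (hlam : 0 < lam) (hNa : 0 < N + a) (t₀ : ℝ)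
    (Z Z' : ℝ → ℝ)
    (hderiv : ∀ t ≤ t₀, HasDerivAt Z (Z' t) t)
    (hineq : ∀ t ≤ t₀, lam * (N + a) < Z t → Z' t ≤ Z t * (N + a - Z t / lam)) :
    ∀ t ≤ t₀, Z t ≤ lam * (N + a) := by
  set L : ℝ := lam * (N + a) with hLdef
  have hL : 0 < L := mul_pos hlam hNa
  -- core estimate
  have key : ∀ u ≤ t₀, ∀ t ≤ u, (∀ x, t ≤ x → x ≤ u → L < Z x) →
      (Z t - L)⁻¹ + (u - t) / lam ≤ (Z u - L)⁻¹ := by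
    intro u hu t htu hpos
    set g : ℝ → ℝ := fun x => (Z x - L)⁻¹ - x / lam with hg
    have hgd : ∀ x ∈ Set.Icc t u,
        HasDerivAt g (-(Z' x) / (Z x - L) ^ 2 - 1 / lam) x := by
      intro x hx
      have hx0 : L < Z x := hpos x hx.1 hx.2
      have hne : Z x - L ≠ 0 := sub_ne_zero.2 hx0.ne'
      have h1 : HasDerivAt (fun y => (Z y - L)⁻¹) (-(Z' x) / (Z x - L) ^ 2) x :=
        ((hderiv x (hx.2.trans hu)).sub_const L).inv hne
      have h2 : HasDerivAt (fun y : ℝ => y / lam) (1 / lam) x := by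
        simpa using (hasDerivAt_id x).div_const lam
      exact h1.sub h2
    have hmono : MonotoneOn g (Set.Icc t u) := by
      apply monotoneOn_of_deriv_nonneg (convex_Icc t u)
      · exact fun x hx => ((hgd x hx).continuousAt).continuousWithinAt
      · intro x hx
        rw [interior_Icc] at hx
        exact ((hgd x (Set.mem_Icc_of_Ioo hx)).differentiableAt).differentiableWithinAt
      · intro x hx
        rw [interior_Icc] at hx
        have hx' := Set.mem_Icc_of_Ioo hx
        rw [(hgd x hx').deriv]
        have hx0 : L < Z x := hpos x hx'.1 hx'.2
        have hne : (0:ℝ) < Z x - L := sub_pos.2 hx0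
        have hzx : 0 < Z x := hL.trans hx0
        have hZ' : lam * Z' x ≤ Z x * (L - Z x) := by
          have h := hineq x (hx'.2.trans hu) hx0
          have hc : lam * (Z x / lam) = Z x := by field_simp
          have : lam * (Z x * (N + a - Z x / lam)) = Z x * (L - Z x) := by
            rw [hLdef]; linear_combination (-(Z x)) * hc
          nlinarith [mul_le_mul_of_nonneg_left h hlam.le]
        have h1 : 1 / lam ≤ -(Z' x) / (Z x - L) ^ 2 := by
          rw [div_le_div_iff₀ hlam (by positivity)]
          nlinarith [mul_pos hL hne]
        linarith
    have hgle : g t ≤ g u := hmono (Set.mem_Icc.2 ⟨le_refl t, htu⟩)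
      (Set.mem_Icc.2 ⟨htu, le_refl u⟩) htu
    have : (Z t - L)⁻¹ - t / lam ≤ (Z u - L)⁻¹ - u / lam := hgle
    have heq : (u - t) / lam = u / lam - t / lam := by ring
    linarith [this, heq]
  -- main argument
  intro s hs
  by_contra hcon
  push_neg at hcon
  -- hcon : L < Z s
  by_cases hall : ∀ x ≤ s, L < Z x
  · -- Z stays above L forever backward: blow up in finite time
    set W : ℝ := (Z s - L)⁻¹ with hW
    have hWpos : 0 < W := by
      rw [hW]; exact inv_pos.2 (sub_pos.2 hcon)
    set t := s - lam * (W + 1) with ht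
    have hts : t ≤ s := by
      have : 0 < lam * (W + 1) := by positivity
      linarith
    have hk := key s hs t hts (fun x hx1 hx2 => hall x (hx2.trans (le_refl s)))
    have hWt : 0 < (Z t - L)⁻¹ := inv_pos.2 (sub_pos.2 (hall t hts))
    have : (s - t) / lam = W + 1 := by
      rw [ht]; field_simp; ring
    linarith
  · push_neg at hall
    -- there is a point ≤ s where Z ≤ L; take the last such point τ
    set S : Set ℝ := {x | x ≤ s ∧ Z x ≤ L} with hS
    have hSne : S.Nonempty := by
      obtain ⟨x, hx1, hx2⟩ := hall
      exact ⟨x, hx1, hx2⟩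
    have hSbdd : BddAbove S := ⟨s, fun x hx => hx.1⟩
    set τ : ℝ := sSup S with hτ
    have hτs : τ ≤ s := csSup_le hSne (fun x hx => hx.1)
    have hcontτ : ContinuousAt Z τ := (hderiv τ (hτs.trans hs)).continuousAt
    -- Z τ ≤ L
    have hZτ : Z τ ≤ L := by
      by_contra hZτ'
      push_neg at hZτ'
      have hev : ∀ᶠ x in nhds τ, L < Z x := hcontτ.eventually (eventually_gt_nhds hZτ')
      obtain ⟨δ, hδ, hball⟩ := Metric.eventually_nhds_iff.1 hev
      obtain ⟨x, hxS, hx⟩ := exists_lt_of_lt_csSup hSne (show τ - δ < τ by linarith)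
      have hxτ : x ≤ τ := le_csSup hSbdd hxS
      have : L < Z x := hball (by rw [Real.dist_eq]; rw [abs_lt]; constructor <;> linarith)
      exact absurd hxS.2 (not_le.2 this)
    have hτlt : τ < s := lt_of_le_of_ne hτs (fun h => absurd hcon (not_lt.2 (h ▸ hZτ)))
    -- on (τ, s], Z > L
    have hmid : ∀ x, τ < x → x ≤ s → L < Z x := by
      intro x hx1 hx2
      by_contra h
      push_neg at h
      exact absurd (le_csSup hSbdd (⟨hx2, h⟩ : x ∈ S)) (not_le.2 hx1)
    -- for t in (τ, s], Z t ≥ Z s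
    have hge : ∀ t, τ < t → t ≤ s → Z s ≤ Z t := by
      intro t ht1 ht2
      have hk := key s hs t ht2 (fun x hx1 hx2 => hmid x (ht1.trans_le hx1) hx2)
      have h1 : 0 < Z t - L := sub_pos.2 (hmid t ht1 ht2)
      have h2 : 0 < Z s - L := sub_pos.2 hcon
      have h3 : 0 ≤ (s - t) / lam := div_nonneg (by linarith) hlam.le
      have h4 : (Z t - L)⁻¹ ≤ (Z s - L)⁻¹ := by linarith
      have h5 : Z s - L ≤ Z t - L := by
        rwa [inv_le_inv₀ h1 h2] at h4
      linarith
    -- take limit t → τ⁺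
    have htend : Filter.Tendsto Z (nhdsWithin τ (Set.Ioi τ)) (nhds (Z τ)) :=
      hcontτ.continuousWithinAt.tendsto
    have hev : ∀ᶠ x in nhdsWithin τ (Set.Ioi τ), Z s ≤ Z x := by
      filter_upwards [Ioo_mem_nhdsGT_of_mem (Set.mem_Ico.2 ⟨le_refl τ, hτlt⟩)] with x hx
      exact hge x hx.1 hx.2.le
    have : Z s ≤ Z τ := ge_of_tendsto htend hev
    linarith
end

section
/- Suppose u is a regular radial solution of the Pucci M⁺ equation near r = 0, i.e. the corresponding trajectory satisfies X(t) → 0 and Z(t) → λ(N+a) as t → −∞, with u(0) = γ > 0. Then u'(r)/r^{1+a} → −γ^p/(λ(N+a)) and u''(r)/r^a → −(γ^p/λ)·(a+1)/(N+a) as r → 0⁺. -/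
open Real Filter Set

theorem stmt18 (N : ℕ) (hN : 3 ≤ N) (lam a p γ δ : ℝ)
    (hlam : 0 < lam) (ha : -1 < a) (hp : 1 < p) (hγ : 0 < γ) (hδ : 0 < δ)
    (u u' u'' : ℝ → ℝ)
    (hu0 : u 0 = γ)
    (hucont : ContinuousOn u (Set.Ico 0 δ))
    (hd1 : ∀ r ∈ Set.Ioo (0:ℝ) δ, HasDerivAt u (u' r) r)
    (hd2 : ∀ r ∈ Set.Ioo (0:ℝ) δ, HasDerivAt u' (u'' r) r)
    (hneg : ∀ r ∈ Set.Ioo (0:ℝ) δ, u' r < 0)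
    (hpos : ∀ r ∈ Set.Ioo (0:ℝ) δ, 0 < u r)
    (heq : ∀ r ∈ Set.Ioo (0:ℝ) δ,
      u'' r + ((N : ℝ) - 1) * u' r / r + r ^ a * u r ^ p / lam = 0)
    (hXlim : Filter.Tendsto
      (fun t => -(Real.exp t * u' (Real.exp t)) / u (Real.exp t))
      Filter.atBot (nhds 0))
    (hZlim : Filter.Tendsto
      (fun t => -(Real.exp ((1+a)*t) * u (Real.exp t) ^ p) / u' (Real.exp t))
      Filter.atBot (nhds (lam * ((N : ℝ) + a)))) :
    Filter.Tendsto (fun r => u' r / r ^ (1+a)) (nhdsWithin 0 (Set.Ioi (0:ℝ)))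
      (nhds (-(γ ^ p / (lam * ((N : ℝ) + a))))) ∧
    Filter.Tendsto (fun r => u'' r / r ^ a) (nhdsWithin 0 (Set.Ioi (0:ℝ)))
      (nhds (-(γ ^ p / lam) * ((a+1)/((N : ℝ) + a)))) := by
  have hN3 : (3:ℝ) ≤ (N:ℝ) := by exact_mod_cast hN
  have hNa : (0:ℝ) < (N:ℝ) + a := by linarith
  have hmem : Set.Ioo (0:ℝ) δ ∈ nhdsWithin 0 (Set.Ioi (0:ℝ)) :=
    Ioo_mem_nhdsGT_of_mem ⟨le_refl 0, hδ⟩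
  -- log tends to atBot on 𝓝[>]0
  have hlog : Tendsto Real.log (nhdsWithin 0 (Set.Ioi (0:ℝ))) atBot :=
    Real.tendsto_log_nhdsGT_zero
  -- Z in terms of r
  have hZ : Tendsto (fun r => -(r ^ (1+a) * u r ^ p) / u' r)
      (nhdsWithin 0 (Set.Ioi (0:ℝ))) (nhds (lam * ((N : ℝ) + a))) := by
    refine (hZlim.comp hlog).congr' ?_
    filter_upwards [self_mem_nhdsWithin] with r hr
    have hr0 : (0:ℝ) < r := hr
    simp only [Function.comp]
    rw [Real.exp_log hr0, Real.rpow_def_of_pos hr0, mul_comm (Real.log r)]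
  -- u tends to γ
  have huγ : Tendsto u (nhdsWithin 0 (Set.Ioi (0:ℝ))) (nhds γ) := by
    have h0 : (0:ℝ) ∈ Set.Ico 0 δ := ⟨le_refl 0, hδ⟩
    have hcw := (hucont 0 h0).tendsto
    rw [hu0] at hcw
    have heqn : nhdsWithin (0:ℝ) (Set.Ioo 0 δ) = nhdsWithin 0 (Set.Ioi (0:ℝ)) :=
      nhdsWithin_Ioo_eq_nhdsGT hδ
    exact hcw.mono_left (le_trans (heqn ▸ nhdsWithin_mono 0 Set.Ioo_subset_Ico_self) le_rfl)
  have hup : Tendsto (fun r => u r ^ p) (nhdsWithin 0 (Set.Ioi (0:ℝ)))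
      (nhds (γ ^ p)) := huγ.rpow_const (Or.inl (ne_of_gt hγ))
  have hZne : lam * ((N:ℝ) + a) ≠ 0 := ne_of_gt (mul_pos hlam hNa)
  -- first limit
  have h1 : Tendsto (fun r => u' r / r ^ (1+a)) (nhdsWithin 0 (Set.Ioi (0:ℝ)))
      (nhds (-(γ ^ p / (lam * ((N : ℝ) + a))))) := by
    have := (hup.neg.div hZ hZne)
    rw [neg_div] at this
    refine this.congr' ?_
    filter_upwards [hmem] with r hr
    have hr0 : (0:ℝ) < r := hr.1
    have hu'ne : u' r ≠ 0 := ne_of_lt (hneg r hr)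
    have hrp : (0:ℝ) < r ^ (1+a) := Real.rpow_pos_of_pos hr0 _
    have hupne : u r ^ p ≠ 0 := ne_of_gt (Real.rpow_pos_of_pos (hpos r hr) _)
    simp only [Pi.div_apply]
    field_simp
  refine ⟨h1, ?_⟩
  -- second limit
  have h2 : Tendsto (fun r => -((N:ℝ) - 1) * (u' r / r ^ (1+a)) - u r ^ p / lam)
      (nhdsWithin 0 (Set.Ioi (0:ℝ)))
      (nhds (-((N:ℝ) - 1) * (-(γ ^ p / (lam * ((N : ℝ) + a)))) - γ ^ p / lam)) :=
    (h1.const_mul _).sub (hup.div_const _)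
  have hconst : -((N:ℝ) - 1) * (-(γ ^ p / (lam * ((N : ℝ) + a)))) - γ ^ p / lam
      = -(γ ^ p / lam) * ((a+1)/((N : ℝ) + a)) := by
    field_simp
    ring
  rw [hconst] at h2
  refine h2.congr' ?_
  filter_upwards [hmem] with r hr
  have hr0 : (0:ℝ) < r := hr.1
  have hra : (0:ℝ) < r ^ a := Real.rpow_pos_of_pos hr0 _
  have h1a : r ^ (1+a) = r * r ^ a := by
    rw [Real.rpow_add hr0, Real.rpow_one]
  have hE : u'' r = -(((N:ℝ) - 1) * u' r / r) - r ^ a * u r ^ p / lam := by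
    have := heq r hr
    linarith
  rw [hE, h1a]
  field_simp
end
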